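/- There exist β > 0 and n_0 ∈ ℕ such that for all n ≥ n_0: if F ⊆ [n] contains at most βn² Schur triples (triples (x,y,z) ∈ F×F×F with x+y=z) and |F| ≤ 0.47n, then the number of maximal sum-free subsets of [n] contained in F is at most 2^{0.249n}. -/

import Mathlib

/-- A set of naturals is sum-free if it contains no Schur triple `x + y = z`. -/
def SumFree (S : Finset ℕ) : Prop := ∀ x ∈ S, ∀ y ∈ S, x + y ∉ S

/-- `M` is a maximal sum-free subset of `[n] = {1, …, n}`. -/
def MaxSF (n : ℕ) (M : Finset ℕ) : Prop :=
  M ⊆ Finset.Icc 1 n ∧ SumFree M ∧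
    ∀ M' : Finset ℕ, M' ⊆ Finset.Icc 1 n → SumFree M' → M ⊆ M' → M = M'

/-- The number of maximal sum-free subsets of `[n]` contained in `F`. -/
noncomputable def fmaxIn (n : ℕ) (F : Finset ℕ) : ℕ :=
  Set.ncard {M : Finset ℕ | MaxSF n M ∧ M ⊆ F}

lemma sumFree_subset {S T : Finset ℕ} (h : SumFree S) (hTS : T ⊆ S) : SumFree T :=
  fun x hx y hy hz => h x (hTS hx) y (hTS hy) (hTS hz)

lemma cube_le_three_pow : ∀ k : ℕ, k ^ 3 ≤ 3 ^ k := by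
  intro k
  induction k with
  | zero => decide
  | succ k ih =>
    by_cases hk : k ≤ 2
    · interval_cases k <;> decide
    · push_neg at hk
      have hA : 3 * k ^ 2 ≤ k ^ 3 := by nlinarith
      have hB : 3 * k + 1 ≤ k ^ 3 := by nlinarith
      have h1 : (k + 1) ^ 3 ≤ 3 * k ^ 3 := by nlinarith
      calc (k + 1) ^ 3 ≤ 3 * k ^ 3 := h1
        _ ≤ 3 * 3 ^ k := by omega
        _ = 3 ^ (k + 1) := by ring

noncomputable def misSet (adj : ℕ → ℕ → Prop) (V : Finset ℕ) : Finset (Finset ℕ) :=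
  @Finset.filter _
    (fun J => (∀ x ∈ J, ∀ y ∈ J, ¬ adj x y) ∧ ∀ b ∈ V, b ∉ J → ∃ a ∈ J, adj a b)
    (Classical.decPred _) V.powerset

lemma mem_misSet {adj : ℕ → ℕ → Prop} {V J : Finset ℕ} :
    J ∈ misSet adj V ↔ J ⊆ V ∧ (∀ x ∈ J, ∀ y ∈ J, ¬ adj x y) ∧
      ∀ b ∈ V, b ∉ J → ∃ a ∈ J, adj a b := by
  classical
  unfold misSet
  simp only [Finset.mem_filter, Finset.mem_powerset, and_assoc]

theorem moon_moser (adj : ℕ → ℕ → Prop) (hsym : ∀ x y, adj x y → adj y x) :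
    ∀ V : Finset ℕ, (∀ x ∈ V, ¬ adj x x) → (misSet adj V).card ^ 3 ≤ 3 ^ V.card := by
  intro V
  induction V using Finset.strongInduction with
  | _ V ih =>
    intro hirr
    rcases V.eq_empty_or_nonempty with rfl | hne
    · have : misSet adj ∅ = {∅} := by
        ext J
        rw [mem_misSet]
        simp only [Finset.subset_empty, Finset.mem_singleton]
        constructor
        · rintro ⟨rfl, -⟩; rfl
        · rintro rfl; simp
      simp [this]
    · classical
      set deg : ℕ → ℕ := fun u => (V.filter (fun y => adj u y)).card with hdeg
      obtain ⟨v, hvV, hvmin⟩ := V.exists_min_image deg hne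
      set Nb : ℕ → Finset ℕ := fun u => insert u (V.filter (fun y => adj u y)) with hNb
      have hNbsub : ∀ u ∈ V, Nb u ⊆ V := by
        intro u hu
        exact Finset.insert_subset hu (Finset.filter_subset _ _)
      have hNbcard : ∀ u ∈ V, (Nb u).card = deg u + 1 := by
        intro u hu
        have : u ∉ V.filter (fun y => adj u y) := by
          simp only [Finset.mem_filter, not_and]
          exact fun _ => hirr u hu
        rw [hNb]
        simp [Finset.card_insert_of_notMem this, hdeg]
      -- every MIS meets Nb v
      have key1 : ∀ J ∈ misSet adj V, ∃ u ∈ Nb v, u ∈ J := by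
        intro J hJ
        rw [mem_misSet] at hJ
        obtain ⟨hJV, hind, hmax⟩ := hJ
        by_cases hvJ : v ∈ J
        · exact ⟨v, Finset.mem_insert_self _ _, hvJ⟩
        · obtain ⟨a, haJ, hadj⟩ := hmax v hvV hvJ
          refine ⟨a, ?_, haJ⟩
          apply Finset.mem_insert_of_mem
          exact Finset.mem_filter.2 ⟨hJV haJ, hsym _ _ hadj⟩
      -- subset of biUnion
      have key2 : misSet adj V ⊆
          (Nb v).biUnion (fun u => (misSet adj (V \ Nb u)).image (insert u)) := by
        intro J hJ
        obtain ⟨u, huNv, huJ⟩ := key1 J hJ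
        rw [mem_misSet] at hJ
        obtain ⟨hJV, hind, hmax⟩ := hJ
        apply Finset.mem_biUnion.2
        refine ⟨u, huNv, Finset.mem_image.2 ⟨J.erase u, ?_, Finset.insert_erase huJ⟩⟩
        rw [mem_misSet]
        have huV : u ∈ V := hNbsub v hvV huNv
        refine ⟨?_, ?_, ?_⟩
        · intro x hx
          have hxJ := Finset.mem_of_mem_erase hx
          have hxu : x ≠ u := Finset.ne_of_mem_erase hx
          rw [Finset.mem_sdiff]
          refine ⟨hJV hxJ, ?_⟩
          rw [hNb]
          simp only [Finset.mem_insert, Finset.mem_filter, not_or, not_and]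
          exact ⟨hxu, fun _ => hind u huJ x hxJ⟩
        · intro x hx y hy
          exact hind x (Finset.mem_of_mem_erase hx) y (Finset.mem_of_mem_erase hy)
        · intro b hb hbJ
          rw [Finset.mem_sdiff] at hb
          obtain ⟨hbV, hbNu⟩ := hb
          have hbu : b ≠ u := by
            intro h; exact hbNu (h ▸ Finset.mem_insert_self _ _)
          have hbJ' : b ∉ J := by
            intro h; exact hbJ (Finset.mem_erase.2 ⟨hbu, h⟩)
          obtain ⟨a, haJ, hadj⟩ := hmax b hbV hbJ'
          have hau : a ≠ u := by
            rintro rfl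
            exact hbNu (Finset.mem_insert_of_mem (Finset.mem_filter.2 ⟨hbV, hadj⟩))
          exact ⟨a, Finset.mem_erase.2 ⟨hau, haJ⟩, hadj⟩
      -- cardinalities
      have hNvne : (Nb v).Nonempty := ⟨v, Finset.mem_insert_self _ _⟩
      obtain ⟨u₀, hu₀, hu₀max⟩ := (Nb v).exists_max_image
        (fun u => (misSet adj (V \ Nb u)).card) hNvne
      set k := deg v + 1 with hk
      have hcard1 : (misSet adj V).card ≤ k * (misSet adj (V \ Nb u₀)).card := by
        calc (misSet adj V).card
            ≤ ((Nb v).biUnion (fun u => (misSet adj (V \ Nb u)).image (insert u))).card :=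
              Finset.card_le_card key2
          _ ≤ ∑ u ∈ Nb v, ((misSet adj (V \ Nb u)).image (insert u)).card :=
              Finset.card_biUnion_le
          _ ≤ ∑ u ∈ Nb v, (misSet adj (V \ Nb u)).card := by
              apply Finset.sum_le_sum
              intro u _
              exact Finset.card_image_le
          _ ≤ ∑ _u ∈ Nb v, (misSet adj (V \ Nb u₀)).card := by
              apply Finset.sum_le_sum
              intro u hu
              exact hu₀max u hu
          _ = (Nb v).card * (misSet adj (V \ Nb u₀)).card := by
              rw [Finset.sum_const, smul_eq_mul]
          _ = k * (misSet adj (V \ Nb u₀)).card := by rw [hNbcard v hvV]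
      have hu₀V : u₀ ∈ V := hNbsub v hvV hu₀
      have hsub : V \ Nb u₀ ⊂ V := by
        apply Finset.sdiff_ssubset (hNbsub u₀ hu₀V)
        exact ⟨u₀, Finset.mem_insert_self _ _⟩
      have hih := ih (V \ Nb u₀) hsub (fun x hx => hirr x (Finset.mem_sdiff.1 hx).1)
      have hcardsub : (V \ Nb u₀).card = V.card - (deg u₀ + 1) := by
        rw [Finset.card_sdiff_of_subset (hNbsub u₀ hu₀V), hNbcard u₀ hu₀V]
      have hku : k ≤ deg u₀ + 1 := by
        have := hvmin u₀ hu₀V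
        omega
      have hkV : k ≤ V.card := by
        have := Finset.card_le_card (hNbsub v hvV)
        rw [hNbcard v hvV] at this
        omega
      calc (misSet adj V).card ^ 3
          ≤ (k * (misSet adj (V \ Nb u₀)).card) ^ 3 := Nat.pow_le_pow_left hcard1 3
        _ = k ^ 3 * ((misSet adj (V \ Nb u₀)).card) ^ 3 := by ring
        _ ≤ k ^ 3 * 3 ^ (V \ Nb u₀).card := Nat.mul_le_mul_left _ hih
        _ ≤ 3 ^ k * 3 ^ (V.card - k) := by
            apply Nat.mul_le_mul (cube_le_three_pow k)
            apply Nat.pow_le_pow_right (by norm_num)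
            omega
        _ = 3 ^ (k + (V.card - k)) := (pow_add 3 _ _).symm
        _ = 3 ^ V.card := by rw [Nat.add_sub_cancel' hkV]

-- the "extension is sum-free" key lemma
lemma extension_sumFree {I J B : Finset ℕ} {b : ℕ} (hB : SumFree B) (hJB : J ⊆ B)
    (hbB : b ∈ B) (hM : SumFree (I ∪ J)) (hIB : Disjoint I B)
    (hpq : ∀ p ∈ insert b J, ∀ q ∈ insert b J, SumFree (insert p (insert q I))) :
    SumFree (insert b (I ∪ J)) := by
  intro x hx y hy hz
  -- classify membership: in insert b J (subset of B) or in I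
  have cls : ∀ w ∈ insert b (I ∪ J), w ∈ insert b J ∨ w ∈ I := by
    intro w hw
    rcases Finset.mem_insert.1 hw with rfl | hw'
    · exact Or.inl (Finset.mem_insert_self _ _)
    · rcases Finset.mem_union.1 hw' with h | h
      · exact Or.inr h
      · exact Or.inl (Finset.mem_insert_of_mem h)
  have hbJB : ∀ w ∈ insert b J, w ∈ B := by
    intro w hw
    rcases Finset.mem_insert.1 hw with rfl | hw'
    · exact hbB
    · exact hJB hw'
  have mI : ∀ w ∈ I, ∀ p q : ℕ, w ∈ insert p (insert q I) := by
    intro w hw p q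
    exact Finset.mem_insert_of_mem (Finset.mem_insert_of_mem hw)
  have mp : ∀ p q : ℕ, p ∈ insert p (insert q I) := fun p q => Finset.mem_insert_self _ _
  have mq : ∀ p q : ℕ, q ∈ insert p (insert q I) :=
    fun p q => Finset.mem_insert_of_mem (Finset.mem_insert_self _ _)
  rcases cls x hx with hxB | hxI <;> rcases cls y hy with hyB | hyI <;>
    rcases cls (x + y) hz with hzB | hzI
  · exact hB x (hbJB x hxB) y (hbJB y hyB) (hbJB _ hzB)
  · exact hpq x hxB y hyB x (mp x y) y (mq x y) (mI _ hzI x y)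
  · exact hpq x hxB (x+y) hzB x (mp _ _) y (mI _ hyI _ _) (mq _ _)
  · exact hpq x hxB x hxB x (mp _ _) y (mI _ hyI _ _) (mI _ hzI _ _)
  · exact hpq y hyB (x+y) hzB x (mI _ hxI _ _) y (mp _ _) (mq _ _)
  · exact hpq y hyB y hyB x (mI _ hxI _ _) y (mp _ _) (mI _ hzI _ _)
  · exact hpq (x+y) hzB (x+y) hzB x (mI _ hxI _ _) y (mI _ hyI _ _) (mp _ _)
  · exact hM x (Finset.mem_union_left _ hxI) y (Finset.mem_union_left _ hyI)
      (Finset.mem_union_left _ hzI)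

noncomputable def adjI (I : Finset ℕ) (x y : ℕ) : Prop :=
  x ≠ y ∧ ¬ SumFree (insert x (insert y I))

theorem count_bound (n : ℕ) (B C : Finset ℕ) (hsub : B ∪ C ⊆ Finset.Icc 1 n)
    (hdisj : Disjoint B C) (hB : SumFree B) :
    ((@Finset.filter _ (fun M => MaxSF n M) (Classical.decPred _)
        (B ∪ C).powerset).card) ^ 3 ≤ 2 ^ (3 * C.card) * 3 ^ B.card := by
  classical
  set F := B ∪ C with hF
  set okI : Finset ℕ → Finset ℕ := fun I => B.filter (fun b => SumFree (insert b I)) with hok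
  -- main containment
  have key : (@Finset.filter _ (fun M => MaxSF n M) (Classical.decPred _) F.powerset) ⊆
      C.powerset.biUnion (fun I => (misSet (adjI I) (okI I)).image (fun J => I ∪ J)) := by
    intro M hM
    rw [Finset.mem_filter] at hM
    obtain ⟨hMF, hmax⟩ := hM
    rw [Finset.mem_powerset] at hMF
    obtain ⟨hMIcc, hMsf, hMmax⟩ := hmax
    set I := M ∩ C with hI
    set J := M ∩ B with hJ
    have hIC : I ⊆ C := Finset.inter_subset_right
    have hJB : J ⊆ B := Finset.inter_subset_right
    have hIM : I ⊆ M := Finset.inter_subset_left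
    have hJM : J ⊆ M := Finset.inter_subset_left
    have hMIJ : M = I ∪ J := by
      ext w
      simp only [hI, hJ, Finset.mem_union, Finset.mem_inter]
      constructor
      · intro hw
        rcases Finset.mem_union.1 (hMF hw) with h | h
        · exact Or.inr ⟨hw, h⟩
        · exact Or.inl ⟨hw, h⟩
      · rintro (⟨h, -⟩ | ⟨h, -⟩) <;> exact h
    have hIBd : Disjoint I B := Finset.disjoint_of_subset_left hIC hdisj.symm
    apply Finset.mem_biUnion.2
    refine ⟨I, Finset.mem_powerset.2 hIC, Finset.mem_image.2 ⟨J, ?_, hMIJ.symm⟩⟩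
    rw [mem_misSet]
    refine ⟨?_, ?_, ?_⟩
    · -- J ⊆ okI I
      intro a haJ
      rw [hok]
      refine Finset.mem_filter.2 ⟨hJB haJ, ?_⟩
      apply sumFree_subset hMsf
      apply Finset.insert_subset (hJM haJ)
      exact hIM
    · -- independence
      intro x hx y hy hadj
      apply hadj.2
      apply sumFree_subset hMsf
      apply Finset.insert_subset (hJM hx)
      apply Finset.insert_subset (hJM hy)
      exact hIM
    · -- maximality
      intro b hbok hbJ
      by_contra hcon
      push_neg at hcon
      have hbB : b ∈ B := Finset.mem_of_mem_filter _ hbok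
      have hbI : SumFree (insert b I) := (Finset.mem_filter.1 hbok).2
      have hpq : ∀ p ∈ insert b J, ∀ q ∈ insert b J, SumFree (insert p (insert q I)) := by
        intro p hp q hq
        rcases Finset.mem_insert.1 hp with rfl | hpJ <;> rcases Finset.mem_insert.1 hq with h | hqJ
        · subst h; rw [Finset.insert_idem]; exact hbI
        · rcases eq_or_ne q p with rfl | hne
          · exact absurd hqJ hbJ
          · by_contra hS
            refine hcon q hqJ ⟨hne, ?_⟩
            rw [Finset.insert_comm]; exact hS
        · subst h
          have hne : p ≠ q := fun h => hbJ (h ▸ hpJ)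
          by_contra hS
          exact hcon p hpJ ⟨hne, hS⟩
        · apply sumFree_subset hMsf
          apply Finset.insert_subset (hJM hpJ)
          apply Finset.insert_subset (hJM hqJ)
          exact hIM
      have hsf : SumFree (insert b (I ∪ J)) := by
        apply extension_sumFree hB hJB hbB (hMIJ ▸ hMsf) hIBd hpq
      have hsub2 : insert b (I ∪ J) ⊆ Finset.Icc 1 n := by
        apply Finset.insert_subset
        · exact hsub (Finset.mem_union_left _ hbB)
        · rw [← hMIJ]; exact hMIcc
      have := hMmax (insert b (I ∪ J)) hsub2 hsf (by rw [hMIJ]; exact Finset.subset_insert _ _)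
      have hbM : b ∈ M := by
        rw [this]
        exact Finset.mem_insert_self _ _
      exact hbJ (Finset.mem_inter.2 ⟨hbM, hbB⟩)
  -- cardinality chain
  have hadjsym : ∀ I : Finset ℕ, ∀ x y, adjI I x y → adjI I y x := by
    intro I x y ⟨hne, hns⟩
    exact ⟨hne.symm, by rwa [Finset.insert_comm]⟩
  have hadjirr : ∀ I : Finset ℕ, ∀ x, ¬ adjI I x x := fun I x h => h.1 rfl
  have hmm : ∀ I : Finset ℕ, (misSet (adjI I) (okI I)).card ^ 3 ≤ 3 ^ B.card := by
    intro I
    calc (misSet (adjI I) (okI I)).card ^ 3 ≤ 3 ^ (okI I).card :=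
          moon_moser _ (hadjsym I) _ (fun x _ => hadjirr I x)
      _ ≤ 3 ^ B.card := by
          apply Nat.pow_le_pow_right (by norm_num)
          exact Finset.card_le_card (Finset.filter_subset _ _)
  obtain ⟨I₀, hI₀, hI₀max⟩ := C.powerset.exists_max_image
    (fun I => (misSet (adjI I) (okI I)).card) ⟨∅, Finset.empty_mem_powerset _⟩
  have hchain : (@Finset.filter _ (fun M => MaxSF n M) (Classical.decPred _) F.powerset).card ≤
      2 ^ C.card * (misSet (adjI I₀) (okI I₀)).card := by
    calc _ ≤ (C.powerset.biUnion (fun I => (misSet (adjI I) (okI I)).image (fun J => I ∪ J))).card :=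
          Finset.card_le_card key
      _ ≤ ∑ I ∈ C.powerset, ((misSet (adjI I) (okI I)).image (fun J => I ∪ J)).card :=
          Finset.card_biUnion_le
      _ ≤ ∑ I ∈ C.powerset, (misSet (adjI I) (okI I)).card :=
          Finset.sum_le_sum (fun I _ => Finset.card_image_le)
      _ ≤ ∑ _I ∈ C.powerset, (misSet (adjI I₀) (okI I₀)).card :=
          Finset.sum_le_sum (fun I hI => hI₀max I hI)
      _ = 2 ^ C.card * (misSet (adjI I₀) (okI I₀)).card := by
          rw [Finset.sum_const, smul_eq_mul, Finset.card_powerset]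
  calc _ ≤ (2 ^ C.card * (misSet (adjI I₀) (okI I₀)).card) ^ 3 := Nat.pow_le_pow_left hchain 3
    _ = 2 ^ (3 * C.card) * ((misSet (adjI I₀) (okI I₀)).card) ^ 3 := by
        rw [mul_pow, ← pow_mul, Nat.mul_comm C.card 3]
    _ ≤ 2 ^ (3 * C.card) * 3 ^ B.card := Nat.mul_le_mul_left _ (hmm I₀)

open Finset SimpleGraph

set_option maxHeartbeats 2000000 in
theorem schur_removal {n : ℕ} (hn : 1 ≤ n) (F : Finset ℕ) (hF : F ⊆ Finset.Icc 1 n)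
    (hT : ((((F ×ˢ F) ×ˢ F).filter (fun p => p.1.1 + p.1.2 = p.2)).card : ℝ)
      ≤ (SimpleGraph.triangleRemovalBound (1/100000)) * n ^ 2) :
    ∃ C ⊆ F, ((C.card : ℝ) ≤ 0.0005 * n ∧ SumFree (F \ C)) := by
  classical
  set ε : ℝ := 1/100000 with hεdef
  set β : ℝ := SimpleGraph.triangleRemovalBound ε with hβdef
  have hβpos : 0 < β := SimpleGraph.triangleRemovalBound_pos (by norm_num)
  set N : ℕ := 3 * n + 1 with hNdef
  haveI : NeZero N := ⟨by omega⟩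
  set T : Finset ((ℕ × ℕ) × ℕ) := ((F ×ˢ F) ×ˢ F).filter (fun p => p.1.1 + p.1.2 = p.2)
    with hTdef
  have hFb : ∀ a ∈ F, 1 ≤ a ∧ a ≤ n := fun a ha => Finset.mem_Icc.1 (hF ha)
  have hcast : ∀ a b : ℕ, a < N → b < N → ((a : ZMod N) = (b : ZMod N)) → a = b := by
    intro a b ha hb h
    have := congrArg ZMod.val h
    rwa [ZMod.val_cast_of_lt ha, ZMod.val_cast_of_lt hb] at this
  have hne0 : ∀ a : ℕ, 0 < a → a < N → ((a : ZMod N) ≠ 0) := by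
    intro a ha haN h
    rw [ZMod.natCast_eq_zero_iff] at h
    exact absurd (Nat.le_of_dvd ha h) (by omega)
  set G : SimpleGraph (ZMod N) :=
    SimpleGraph.fromRel (fun x y => ∃ a ∈ F, y = x + (a : ℕ)) with hGdef
  letI : DecidableRel G.Adj := Classical.decRel _
  have hAdj : ∀ x y : ZMod N, G.Adj x y ↔ x ≠ y ∧
      ((∃ a ∈ F, y = x + (a : ℕ)) ∨ ∃ a ∈ F, x = y + (a : ℕ)) := by
    intro x y
    rw [hGdef, SimpleGraph.fromRel_adj]
  -- every triangle gives a Schur triple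
  have tri : ∀ x y z : ZMod N, G.Adj x y → G.Adj y z → G.Adj x z →
      ∃ q : ((ℕ × ℕ) × ℕ) × ZMod N, q.1 ∈ T ∧
        ({x, y, z} : Finset (ZMod N)) = {q.2, q.2 + (q.1.1.1 : ℕ), q.2 + (q.1.2 : ℕ)} := by
    intro x y z hxy hyz hxz
    rw [hAdj] at hxy hyz hxz
    obtain ⟨hxy0, h1 | h1⟩ := hxy <;> obtain ⟨hyz0, h2 | h2⟩ := hyz <;>
      obtain ⟨hxz0, h3 | h3⟩ := hxz <;>
      obtain ⟨a, haF, ha⟩ := h1 <;> obtain ⟨b, hbF, hb⟩ := h2 <;> obtain ⟨c, hcF, hc⟩ := h3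
    · -- y = x+a, z = y+b, z = x+c : a+b=c, u := x
      have he : ((a + b : ℕ) : ZMod N) = ((c : ℕ) : ZMod N) := by
        push_cast
        linear_combination hc - ha - hb
      have habc : a + b = c := hcast _ _ (by have := hFb a haF; have := hFb b hbF; omega)
        (by have := hFb c hcF; omega) he
      refine ⟨⟨((a, b), c), x⟩, Finset.mem_filter.2 ⟨by simp [Finset.mem_product, haF, hbF, hcF], habc⟩, ?_⟩
      show ({x, y, z} : Finset (ZMod N)) = {x, x + ((a : ℕ) : ZMod N), x + ((c : ℕ) : ZMod N)}
      rw [← ha, ← hc]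
    · -- y = x+a, z = y+b, x = z+c : contradiction
      exfalso
      have he : ((a + b + c : ℕ) : ZMod N) = 0 := by
        push_cast
        linear_combination - ha - hb - hc
      exact hne0 (a + b + c) (by have := hFb a haF; omega)
        (by have := hFb a haF; have := hFb b hbF; have := hFb c hcF; omega) he
    · -- y = x+a, y = z+b, z = x+c : c+b=a, u := x
      have he : ((c + b : ℕ) : ZMod N) = ((a : ℕ) : ZMod N) := by
        push_cast
        linear_combination ha - hb - hc
      have habc : c + b = a := hcast _ _ (by have := hFb c hcF; have := hFb b hbF; omega)
        (by have := hFb a haF; omega) he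
      refine ⟨⟨((c, b), a), x⟩, Finset.mem_filter.2 ⟨by simp [Finset.mem_product, haF, hbF, hcF], habc⟩, ?_⟩
      show ({x, y, z} : Finset (ZMod N)) = {x, x + ((c : ℕ) : ZMod N), x + ((a : ℕ) : ZMod N)}
      rw [← ha, ← hc]
      ext w; simp; tauto
    · -- y = x+a, y = z+b, x = z+c : c+a=b, u := z
      have he : ((c + a : ℕ) : ZMod N) = ((b : ℕ) : ZMod N) := by
        push_cast
        linear_combination - ha + hb - hc
      have habc : c + a = b := hcast _ _ (by have := hFb c hcF; have := hFb a haF; omega)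
        (by have := hFb b hbF; omega) he
      refine ⟨⟨((c, a), b), z⟩, Finset.mem_filter.2 ⟨by simp [Finset.mem_product, haF, hbF, hcF], habc⟩, ?_⟩
      show ({x, y, z} : Finset (ZMod N)) = {z, z + ((c : ℕ) : ZMod N), z + ((b : ℕ) : ZMod N)}
      rw [← hb, ← hc]
      ext w; simp; tauto
    · -- x = y+a, z = y+b, z = x+c : a+c=b, u := y
      have he : ((a + c : ℕ) : ZMod N) = ((b : ℕ) : ZMod N) := by
        push_cast
        linear_combination - ha + hb - hc
      have habc : a + c = b := hcast _ _ (by have := hFb a haF; have := hFb c hcF; omega)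
        (by have := hFb b hbF; omega) he
      refine ⟨⟨((a, c), b), y⟩, Finset.mem_filter.2 ⟨by simp [Finset.mem_product, haF, hbF, hcF], habc⟩, ?_⟩
      show ({x, y, z} : Finset (ZMod N)) = {y, y + ((a : ℕ) : ZMod N), y + ((b : ℕ) : ZMod N)}
      rw [← ha, ← hb]
      ext w; simp; tauto
    · -- x = y+a, z = y+b, x = z+c : b+c=a, u := y
      have he : ((b + c : ℕ) : ZMod N) = ((a : ℕ) : ZMod N) := by
        push_cast
        linear_combination ha - hb - hc
      have habc : b + c = a := hcast _ _ (by have := hFb b hbF; have := hFb c hcF; omega)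
        (by have := hFb a haF; omega) he
      refine ⟨⟨((b, c), a), y⟩, Finset.mem_filter.2 ⟨by simp [Finset.mem_product, haF, hbF, hcF], habc⟩, ?_⟩
      show ({x, y, z} : Finset (ZMod N)) = {y, y + ((b : ℕ) : ZMod N), y + ((a : ℕ) : ZMod N)}
      rw [← ha, ← hb]
      ext w; simp; tauto
    · -- x = y+a, y = z+b, z = x+c : contradiction
      exfalso
      have he : ((a + b + c : ℕ) : ZMod N) = 0 := by
        push_cast
        linear_combination - ha - hb - hc
      exact hne0 (a + b + c) (by have := hFb a haF; omega)
        (by have := hFb a haF; have := hFb b hbF; have := hFb c hcF; omega) he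
    · -- x = y+a, y = z+b, x = z+c : b+a=c, u := z
      have he : ((b + a : ℕ) : ZMod N) = ((c : ℕ) : ZMod N) := by
        push_cast
        linear_combination - ha - hb + hc
      have habc : b + a = c := hcast _ _ (by have := hFb b hbF; have := hFb a haF; omega)
        (by have := hFb c hcF; omega) he
      refine ⟨⟨((b, a), c), z⟩, Finset.mem_filter.2 ⟨by simp [Finset.mem_product, haF, hbF, hcF], habc⟩, ?_⟩
      show ({x, y, z} : Finset (ZMod N)) = {z, z + ((b : ℕ) : ZMod N), z + ((c : ℕ) : ZMod N)}
      rw [← hb, ← hc]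
      ext w; simp; tauto
  -- counting triangles
  have hcount : (G.cliqueFinset 3).card ≤ T.card * N := by
    set f : Finset (ZMod N) → ((ℕ × ℕ) × ℕ) × ZMod N := fun s =>
      if h : ∃ q : ((ℕ × ℕ) × ℕ) × ZMod N, q.1 ∈ T ∧
          s = {q.2, q.2 + (q.1.1.1 : ℕ), q.2 + (q.1.2 : ℕ)} then h.choose
      else ⟨((0, 0), 0), 0⟩ with hfdef
    have hex : ∀ s ∈ G.cliqueFinset 3, ∃ q : ((ℕ × ℕ) × ℕ) × ZMod N, q.1 ∈ T ∧
        s = {q.2, q.2 + (q.1.1.1 : ℕ), q.2 + (q.1.2 : ℕ)} := by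
      intro s hs
      rw [SimpleGraph.mem_cliqueFinset_iff, SimpleGraph.is3Clique_iff] at hs
      obtain ⟨x, y, z, hxy, hxz, hyz, rfl⟩ := hs
      obtain ⟨q, hq1, hq2⟩ := tri x y z hxy hyz hxz
      exact ⟨q, hq1, hq2⟩
    have hrepr : ∀ s ∈ G.cliqueFinset 3, (f s).1 ∈ T ∧
        s = {(f s).2, (f s).2 + ((f s).1.1.1 : ℕ), (f s).2 + ((f s).1.2 : ℕ)} := by
      intro s hs
      have h := hex s hs
      rw [hfdef]
      simp only [dif_pos h]
      exact h.choose_spec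
    calc (G.cliqueFinset 3).card ≤ (T ×ˢ (Finset.univ : Finset (ZMod N))).card := by
          apply Finset.card_le_card_of_injOn f
          · intro s hs
            exact Finset.mem_product.2 ⟨(hrepr s hs).1, Finset.mem_univ _⟩
          · intro s hs s' hs' hff
            rw [(hrepr s hs).2, (hrepr s' hs').2, hff]
      _ = T.card * N := by
          rw [Finset.card_product, Finset.card_univ, ZMod.card]
  -- strict bound for triangle removal
  have hstrict : ((G.cliqueFinset 3).card : ℝ) <
      SimpleGraph.triangleRemovalBound ε * (Fintype.card (ZMod N)) ^ 3 := by
    rw [ZMod.card]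
    have h1 : ((G.cliqueFinset 3).card : ℝ) ≤ (T.card : ℝ) * N := by exact_mod_cast hcount
    have hNn : (n : ℝ) < (N : ℝ) := by
      have : n < N := by omega
      exact_mod_cast this
    have hNpos : (0 : ℝ) < N := by positivity
    have hnn : (0:ℝ) ≤ (n:ℝ) := Nat.cast_nonneg n
    calc ((G.cliqueFinset 3).card : ℝ) ≤ (T.card : ℝ) * N := h1
      _ ≤ β * n ^ 2 * N := by
          apply mul_le_mul_of_nonneg_right _ (le_of_lt hNpos)
          exact hT
      _ = β * ((n : ℝ) ^ 2 * N) := by ring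
      _ < β * ((N : ℝ) ^ 2 * N) := by
          apply mul_lt_mul_of_pos_left _ hβpos
          apply mul_lt_mul_of_pos_right _ hNpos
          nlinarith
      _ = β * (N : ℝ) ^ 3 := by ring
  obtain ⟨G', hG'le, hdec, hedge, hfree⟩ := SimpleGraph.triangle_removal hstrict
  letI := hdec
  set R : Finset (Sym2 (ZMod N)) := G.edgeFinset \ G'.edgeFinset with hRdef
  have hRsub : G'.edgeFinset ⊆ G.edgeFinset := SimpleGraph.edgeFinset_mono hG'le
  have hRcard : (R.card : ℝ) < ε * (N : ℝ) ^ 2 := by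
    have h1 : R.card = G.edgeFinset.card - G'.edgeFinset.card := Finset.card_sdiff_of_subset hRsub
    have h2 : (R.card : ℝ) = (G.edgeFinset.card : ℝ) - G'.edgeFinset.card := by
      rw [h1, Nat.cast_sub (Finset.card_le_card hRsub)]
    rw [h2]
    calc (G.edgeFinset.card : ℝ) - G'.edgeFinset.card
        < ε * ((Fintype.card (ZMod N)) ^ 2 : ℕ) := hedge
      _ = ε * (N : ℝ) ^ 2 := by rw [ZMod.card]; push_cast; ring
  set E : ℕ → Finset (Sym2 (ZMod N)) :=
    fun a => Finset.image (fun u : ZMod N => s(u, u + (a : ℕ))) Finset.univ with hEdef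
  set r : ℕ → ℕ := fun a => (R ∩ E a).card with hrdef
  have hEdisj : ∀ a ∈ F, ∀ a' ∈ F, a ≠ a' → Disjoint (E a) (E a') := by
    intro a haF a' ha'F hne
    rw [Finset.disjoint_left]
    intro e he he'
    rw [hEdef] at he he'
    obtain ⟨u, -, rfl⟩ := Finset.mem_image.1 he
    obtain ⟨v, -, hv⟩ := Finset.mem_image.1 he'
    rw [Sym2.eq_iff] at hv
    rcases hv with ⟨h1, h2⟩ | ⟨h1, h2⟩
    · have heq : ((a : ℕ) : ZMod N) = ((a' : ℕ) : ZMod N) := by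
        linear_combination h1 - h2
      exact hne (hcast a a' (by have := hFb a haF; omega) (by have := hFb a' ha'F; omega) heq)
    · -- v = u + a and u = v + a' : a + a' ≡ 0
      have he0 : ((a + a' : ℕ) : ZMod N) = 0 := by
        push_cast
        linear_combination h2 - h1
      exact hne0 (a + a') (by have := hFb a haF; omega)
        (by have := hFb a haF; have := hFb a' ha'F; omega) he0
  have hsum : ∑ a ∈ F, r a ≤ R.card := by
    have hd : (F : Set ℕ).PairwiseDisjoint (fun a => R ∩ E a) := by
      intro a ha b hb hab
      exact Finset.disjoint_of_subset_left Finset.inter_subset_right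
        (Finset.disjoint_of_subset_right Finset.inter_subset_right (hEdisj a ha b hb hab))
    calc ∑ a ∈ F, r a = (F.biUnion (fun a => R ∩ E a)).card :=
          (Finset.card_biUnion hd).symm
      _ ≤ R.card := by
          apply Finset.card_le_card
          intro e he
          obtain ⟨a, -, hea⟩ := Finset.mem_biUnion.1 he
          exact (Finset.mem_inter.1 hea).1
  set C : Finset ℕ := F.filter (fun a => N ≤ 9 * r a) with hCdef
  have hCcard : C.card * N ≤ 9 * R.card := by
    calc C.card * N = ∑ _a ∈ C, N := by rw [Finset.sum_const, smul_eq_mul]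
      _ ≤ ∑ a ∈ C, 9 * r a := Finset.sum_le_sum (fun a ha => (Finset.mem_filter.1 ha).2)
      _ ≤ ∑ a ∈ F, 9 * r a := Finset.sum_le_sum_of_subset (Finset.filter_subset _ _)
      _ = 9 * ∑ a ∈ F, r a := (Finset.mul_sum _ _ _).symm
      _ ≤ 9 * R.card := Nat.mul_le_mul_left _ hsum
  refine ⟨C, Finset.filter_subset _ _, ?_, ?_⟩
  · -- size bound
    have hNpos : (0 : ℝ) < N := by positivity
    have h1 : (C.card : ℝ) * N ≤ 9 * R.card := by exact_mod_cast hCcard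
    have h2 : (C.card : ℝ) * N < 9 * (ε * N ^ 2) := lt_of_le_of_lt h1 (by linarith)
    have h3 : (C.card : ℝ) < 9 * ε * N := by
      have := lt_of_mul_lt_mul_right (by nlinarith : (C.card : ℝ) * N < (9 * ε * N) * N) hNpos.le
      exact this
    have h4 : (N : ℝ) ≤ 4 * n := by
      have : (N : ℕ) ≤ 4 * n := by omega
      exact_mod_cast this
    calc (C.card : ℝ) ≤ 9 * ε * N := le_of_lt h3
      _ ≤ 9 * ε * (4 * n) := by
          apply mul_le_mul_of_nonneg_left h4
          rw [hεdef]; norm_num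
      _ ≤ 0.0005 * n := by
          rw [hεdef]
          have hnn : (0:ℝ) ≤ (n:ℝ) := Nat.cast_nonneg n
          nlinarith
  · -- sum-freeness
    intro x hx y hy hz
    rw [Finset.mem_sdiff] at hx hy hz
    obtain ⟨hxF, hxC⟩ := hx
    obtain ⟨hyF, hyC⟩ := hy
    obtain ⟨hzF, hzC⟩ := hz
    have hxb := hFb x hxF
    have hyb := hFb y hyF
    have hzb := hFb (x + y) hzF
    have hz' : ((x + y : ℕ) : ZMod N) = (x : ℕ) + (y : ℕ) := by push_cast; ring
    have hadj1 : ∀ u : ZMod N, G.Adj u (u + (x : ℕ)) := by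
      intro u
      rw [hAdj]
      refine ⟨?_, Or.inl ⟨x, hxF, rfl⟩⟩
      intro h
      exact hne0 x (by omega) (by omega) (left_eq_add.1 h)
    have hadj3 : ∀ u : ZMod N, G.Adj u (u + ((x + y : ℕ) : ZMod N)) := by
      intro u
      rw [hAdj]
      refine ⟨?_, Or.inl ⟨x + y, hzF, rfl⟩⟩
      intro h
      exact hne0 (x + y) (by omega) (by omega) (left_eq_add.1 h)
    have hadj2 : ∀ u : ZMod N, G.Adj (u + (x : ℕ)) (u + ((x + y : ℕ) : ZMod N)) := by
      intro u
      rw [hAdj]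
      constructor
      · intro h
        have : ((x : ℕ) : ZMod N) = ((x + y : ℕ) : ZMod N) := add_left_cancel h
        have := hcast x (x + y) (by omega) (by omega) this
        omega
      · refine Or.inl ⟨y, hyF, ?_⟩
        rw [hz']
        ring
    set e1 : ZMod N → Sym2 (ZMod N) := fun u => s(u, u + (x : ℕ)) with he1def
    set e2 : ZMod N → Sym2 (ZMod N) := fun u => s(u + (x : ℕ), u + ((x + y : ℕ) : ZMod N))
      with he2def
    set e3 : ZMod N → Sym2 (ZMod N) := fun u => s(u, u + ((x + y : ℕ) : ZMod N)) with he3def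
    have hone : ∀ u : ZMod N, e1 u ∈ R ∨ e2 u ∈ R ∨ e3 u ∈ R := by
      intro u
      by_contra hcon
      push_neg at hcon
      obtain ⟨h1, h2, h3⟩ := hcon
      have m1 : e1 u ∈ G.edgeFinset := SimpleGraph.mem_edgeFinset.2 ((hadj1 u))
      have m2 : e2 u ∈ G.edgeFinset := SimpleGraph.mem_edgeFinset.2 ((hadj2 u))
      have m3 : e3 u ∈ G.edgeFinset := SimpleGraph.mem_edgeFinset.2 ((hadj3 u))
      have g1 : e1 u ∈ G'.edgeFinset := by
        by_contra hg; exact h1 (Finset.mem_sdiff.2 ⟨m1, hg⟩)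
      have g2 : e2 u ∈ G'.edgeFinset := by
        by_contra hg; exact h2 (Finset.mem_sdiff.2 ⟨m2, hg⟩)
      have g3 : e3 u ∈ G'.edgeFinset := by
        by_contra hg; exact h3 (Finset.mem_sdiff.2 ⟨m3, hg⟩)
      rw [SimpleGraph.mem_edgeFinset, SimpleGraph.mem_edgeSet] at g1 g2 g3
      exact hfree {u, u + (x : ℕ), u + ((x + y : ℕ) : ZMod N)}
        (SimpleGraph.is3Clique_triple_iff.2 ⟨g1, g3, g2⟩)
    set ψ : ZMod N → Fin 3 × Sym2 (ZMod N) := fun u =>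
      if e1 u ∈ R then (0, e1 u) else if e2 u ∈ R then (1, e2 u) else (2, e3 u) with hψdef
    set U : Finset (Sym2 (ZMod N)) := (R ∩ E x) ∪ (R ∩ E y) ∪ (R ∩ E (x + y)) with hUdef
    have hmaps : ∀ u : ZMod N, ψ u ∈ (Finset.univ : Finset (Fin 3)) ×ˢ U := by
      intro u
      simp only [hψdef]
      split_ifs with h1 h2
      · refine Finset.mem_product.2 ⟨Finset.mem_univ _, ?_⟩
        rw [hUdef]
        apply Finset.mem_union_left
        apply Finset.mem_union_left
        exact Finset.mem_inter.2 ⟨h1, Finset.mem_image.2 ⟨u, Finset.mem_univ _, rfl⟩⟩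
      · refine Finset.mem_product.2 ⟨Finset.mem_univ _, ?_⟩
        rw [hUdef]
        apply Finset.mem_union_left
        apply Finset.mem_union_right
        refine Finset.mem_inter.2 ⟨h2, Finset.mem_image.2 ⟨u + (x : ℕ), Finset.mem_univ _, ?_⟩⟩
        rw [he2def]
        have harr : u + ((x + y : ℕ) : ZMod N) = (u + (x : ℕ)) + ((y : ℕ) : ZMod N) := by
          push_cast; ring
        simp only
        rw [harr]
      · rcases hone u with h | h | h
        · exact absurd h h1
        · exact absurd h h2
        · refine Finset.mem_product.2 ⟨Finset.mem_univ _, ?_⟩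
          rw [hUdef]
          apply Finset.mem_union_right
          exact Finset.mem_inter.2 ⟨h, Finset.mem_image.2 ⟨u, Finset.mem_univ _, rfl⟩⟩
    have h2x : ((2 * x : ℕ) : ZMod N) ≠ 0 := hne0 _ (by omega) (by omega)
    have h2z : ((2 * (x + y) : ℕ) : ZMod N) ≠ 0 := hne0 _ (by omega) (by omega)
    have hinj : Set.InjOn ψ (Finset.univ : Finset (ZMod N)) := by
      intro u _ v _ huv
      rw [hψdef] at huv
      simp only at huv
      split_ifs at huv with h1 h2 h3 h4 h5 h6 h7 h8 h9
      all_goals rw [Prod.mk.injEq] at huv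
      all_goals obtain ⟨hf, he⟩ := huv
      -- mismatched branches
      all_goals first
        | (exact absurd hf (by decide))
        | skip
      · -- both e1
        rw [he1def] at he
        simp only [Sym2.eq_iff] at he
        rcases he with ⟨h, -⟩ | ⟨ha, hb⟩
        · exact h
        · exfalso
          apply h2x
          push_cast
          linear_combination hb - ha
      · -- both e2
        rw [he2def] at he
        simp only [Sym2.eq_iff] at he
        rcases he with ⟨h, -⟩ | ⟨ha, hb⟩
        · exact add_right_cancel h
        · exfalso
          have hy0 : ((2 * y : ℕ) : ZMod N) ≠ 0 := hne0 _ (by omega) (by omega)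
          apply hy0
          push_cast at ha hb ⊢
          linear_combination hb - ha
      · -- both e3
        rw [he3def] at he
        simp only [Sym2.eq_iff] at he
        rcases he with ⟨h, -⟩ | ⟨ha, hb⟩
        · exact h
        · exfalso
          apply h2z
          push_cast at ha hb ⊢
          linear_combination hb - ha
    have hUcard : U.card ≤ r x + r y + r (x + y) := by
      rw [hUdef, hrdef]
      calc ((R ∩ E x) ∪ (R ∩ E y) ∪ (R ∩ E (x + y))).card
          ≤ ((R ∩ E x) ∪ (R ∩ E y)).card + (R ∩ E (x + y)).card := Finset.card_union_le _ _
        _ ≤ (R ∩ E x).card + (R ∩ E y).card + (R ∩ E (x + y)).card := by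
            have := Finset.card_union_le (R ∩ E x) (R ∩ E y)
            omega
    have hNle : N ≤ 3 * (r x + r y + r (x + y)) := by
      have h1 : (Finset.univ : Finset (ZMod N)).card ≤
          ((Finset.univ : Finset (Fin 3)) ×ˢ U).card := by
        apply Finset.card_le_card_of_injOn ψ (fun u _ => hmaps u) hinj
      rw [Finset.card_univ, ZMod.card, Finset.card_product, Finset.card_univ,
        Fintype.card_fin] at h1
      omega
    rw [hCdef] at hxC hyC hzC
    simp only [Finset.mem_filter, not_and, not_le] at hxC hyC hzC
    have hx9 := hxC hxF
    have hy9 := hyC hyF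
    have hz9 := hzC hzF
    omega

set_option maxHeartbeats 1000000 in
/-- There is `β > 0` such that for all large `n`: any `F ⊆ [n]` with at most `βn²`
Schur triples and `|F| ≤ 0.47n` contains at most `2^{0.249n}` maximal sum-free
subsets of `[n]`. -/
theorem small_container_bound : ∃ β : ℝ, 0 < β ∧ ∃ n₀ : ℕ, ∀ n : ℕ, n₀ ≤ n →
    ∀ F : Finset ℕ, F ⊆ Finset.Icc 1 n →
      (((((F ×ˢ F) ×ˢ F).filter (fun p => p.1.1 + p.1.2 = p.2)).card : ℝ) ≤ β * n ^ 2) →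
      ((F.card : ℝ) ≤ 0.47 * n) →
      (fmaxIn n F : ℝ) ≤ (2 : ℝ) ^ ((0.249 : ℝ) * n) := by
  classical
  refine ⟨SimpleGraph.triangleRemovalBound (1/100000),
    SimpleGraph.triangleRemovalBound_pos (by norm_num), 1, ?_⟩
  intro n hn F hF hT hFcard
  obtain ⟨C, hCF, hCcard, hBsf⟩ := schur_removal hn F hF hT
  set B : Finset ℕ := F \ C with hBdef
  have hunion : B ∪ C = F := Finset.sdiff_union_of_subset hCF
  have hcount := count_bound n B C (by rw [hunion]; exact hF) Finset.sdiff_disjoint hBsf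
  set K : ℕ := (@Finset.filter _ (fun M => MaxSF n M) (Classical.decPred _)
      (B ∪ C).powerset).card with hKdef
  have hfmax : fmaxIn n F = K := by
    rw [fmaxIn, hKdef, hunion]
    have hset : {M : Finset ℕ | MaxSF n M ∧ M ⊆ F} =
        ((@Finset.filter _ (fun M => MaxSF n M) (Classical.decPred _) F.powerset :
          Finset (Finset ℕ)) : Set (Finset ℕ)) := by
      ext M
      simp only [Set.mem_setOf_eq, Finset.coe_filter, Finset.mem_powerset, and_comm]
    rw [hset, Set.ncard_coe_finset]
  -- numeric part
  have hbcard : ((B.card : ℝ)) ≤ 0.47 * n := by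
    refine le_trans ?_ hFcard
    exact_mod_cast Finset.card_le_card (Finset.sdiff_subset)
  have key1 : (3 : ℝ) ≤ (2 : ℝ) ^ ((1.585 : ℝ)) := by
    have hpow : ((2 : ℝ) ^ ((1.585 : ℝ))) ^ (200 : ℕ) = (2 : ℝ) ^ (317 : ℕ) := by
      rw [← Real.rpow_natCast ((2 : ℝ) ^ ((1.585 : ℝ))) 200,
        ← Real.rpow_mul (by norm_num : (0:ℝ) ≤ 2),
        ← Real.rpow_natCast (2 : ℝ) 317]
      norm_num
    have hnum : (3 : ℝ) ^ (200 : ℕ) ≤ (2 : ℝ) ^ (317 : ℕ) := by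
      have : (3 : ℕ) ^ (200 : ℕ) ≤ (2 : ℕ) ^ (317 : ℕ) := by decide
      exact_mod_cast this
    have h2 : (3 : ℝ) ^ (200 : ℕ) ≤ ((2 : ℝ) ^ ((1.585 : ℝ))) ^ (200 : ℕ) := by
      rw [hpow]; exact hnum
    exact le_of_pow_le_pow_left₀ (by norm_num) (Real.rpow_nonneg (by norm_num) _) h2
  have hK3 : ((K : ℝ)) ^ 3 ≤ (2 : ℝ) ^ ((3 * C.card : ℕ) : ℝ) *
      ((2 : ℝ) ^ ((1.585 : ℝ))) ^ (B.card : ℕ) := by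
    have h1 : ((K : ℝ)) ^ 3 ≤ (2 : ℝ) ^ (3 * C.card : ℕ) * (3 : ℝ) ^ (B.card : ℕ) := by
      exact_mod_cast hcount
    have h2 : (3 : ℝ) ^ (B.card : ℕ) ≤ ((2 : ℝ) ^ ((1.585 : ℝ))) ^ (B.card : ℕ) :=
      pow_le_pow_left₀ (by norm_num) key1 _
    calc ((K : ℝ)) ^ 3 ≤ (2 : ℝ) ^ (3 * C.card : ℕ) * (3 : ℝ) ^ (B.card : ℕ) := h1
      _ ≤ (2 : ℝ) ^ (3 * C.card : ℕ) * ((2 : ℝ) ^ ((1.585 : ℝ))) ^ (B.card : ℕ) := by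
          apply mul_le_mul_of_nonneg_left h2 (by positivity)
      _ = (2 : ℝ) ^ ((3 * C.card : ℕ) : ℝ) * ((2 : ℝ) ^ ((1.585 : ℝ))) ^ (B.card : ℕ) := by
          rw [Real.rpow_natCast]
  have hK3' : ((K : ℝ)) ^ 3 ≤ (2 : ℝ) ^ (((3 * C.card : ℕ) : ℝ) + (1.585 : ℝ) * B.card) := by
    rw [Real.rpow_add (by norm_num : (0:ℝ) < 2)]
    calc ((K : ℝ)) ^ 3 ≤ (2 : ℝ) ^ ((3 * C.card : ℕ) : ℝ) *
        ((2 : ℝ) ^ ((1.585 : ℝ))) ^ (B.card : ℕ) := hK3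
      _ = (2 : ℝ) ^ ((3 * C.card : ℕ) : ℝ) * (2 : ℝ) ^ ((1.585 : ℝ) * B.card) := by
          rw [← Real.rpow_natCast ((2 : ℝ) ^ ((1.585 : ℝ))) B.card,
            ← Real.rpow_mul (by norm_num : (0:ℝ) ≤ 2)]
  have hexp : ((3 * C.card : ℕ) : ℝ) + (1.585 : ℝ) * B.card ≤ (0.249 : ℝ) * n * 3 := by
    have h1 : ((3 * C.card : ℕ) : ℝ) = 3 * (C.card : ℝ) := by push_cast; ring
    rw [h1]
    have hb0 : (0 : ℝ) ≤ (B.card : ℝ) := Nat.cast_nonneg _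
    nlinarith [hCcard, hbcard]
  have hfinal : ((K : ℝ)) ^ 3 ≤ ((2 : ℝ) ^ ((0.249 : ℝ) * n)) ^ 3 := by
    have h1 : ((2 : ℝ) ^ ((0.249 : ℝ) * n)) ^ 3 = (2 : ℝ) ^ ((0.249 : ℝ) * n * 3) := by
      rw [← Real.rpow_natCast ((2 : ℝ) ^ ((0.249 : ℝ) * n)) 3,
        ← Real.rpow_mul (by norm_num : (0:ℝ) ≤ 2)]
      norm_num
    rw [h1]
    refine le_trans hK3' ?_
    exact Real.rpow_le_rpow_of_exponent_le (by norm_num) hexp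
  rw [hfmax]
  exact le_of_pow_le_pow_left₀ (by norm_num) (Real.rpow_nonneg (by norm_num) _) hfinal
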